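/- Let D be a positive integer, let I ⊆ ℝ be an open interval, let α, σ : I → ℝ be differentiable functions with α(t) > 0 and σ(t) > 0 for all t ∈ I, and set λ(t) := log(α(t)/σ(t)). Let ε̂ : ℝ → ℝ^D be continuous, let s ∈ I and x_s ∈ ℝ^D. Define x : I → ℝ^D by x(t) := (α(t)/α(s))·x_s − α(t)·∫_{λ(s)}^{λ(t)} e^{−u} ε̂(u) du. Then x(s) = x_s, x is differentiable on I, and for every t ∈ I, x'(t) = (α'(t)/α(t))·x(t) + (σ'(t) − σ(t)·α'(t)/α(t))·ε̂(λ(t)). In other words, the exponential-integral formula gives the exact solution of the noise-prediction diffusion ODE dx/dt = f(t)x + (g²(t)/(2σ(t)))ε̂, where f(t) = α'(t)/α(t) and g²(t) = dσ²(t)/dt − 2(α'(t)/α(t))σ²(t). -/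

import Mathlib

/-- The exponential-integral formula gives the exact solution of the
noise-prediction diffusion ODE. -/
theorem stmt_0 (D : ℕ) (hD : 0 < D) (a b : ℝ)
    (α σ α' σ' : ℝ → ℝ)
    (hα : ∀ t ∈ Set.Ioo a b, HasDerivAt α (α' t) t)
    (hσ : ∀ t ∈ Set.Ioo a b, HasDerivAt σ (σ' t) t)
    (hαpos : ∀ t ∈ Set.Ioo a b, 0 < α t)
    (hσpos : ∀ t ∈ Set.Ioo a b, 0 < σ t)
    (lam : ℝ → ℝ) (hlam : ∀ t, lam t = Real.log (α t / σ t))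
    (ε : ℝ → EuclideanSpace ℝ (Fin D)) (hε : Continuous ε)
    (s : ℝ) (hs : s ∈ Set.Ioo a b) (xs : EuclideanSpace ℝ (Fin D))
    (x : ℝ → EuclideanSpace ℝ (Fin D))
    (hx : ∀ t, x t = (α t / α s) • xs -
      (α t) • ∫ u in lam s..lam t, Real.exp (-u) • ε u) :
    x s = xs ∧ DifferentiableOn ℝ x (Set.Ioo a b) ∧
      ∀ t ∈ Set.Ioo a b,
        HasDerivAt x ((α' t / α t) • x t +
          (σ' t - σ t * α' t / α t) • ε (lam t)) t := by
  set F : ℝ → EuclideanSpace ℝ (Fin D) := fun v => ∫ u in lam s..v, Real.exp (-u) • ε u with hF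
  have hcont : Continuous fun u : ℝ => Real.exp (-u) • ε u :=
    ((Real.continuous_exp.comp continuous_neg).smul hε)
  have hFd : ∀ v : ℝ, HasDerivAt F (Real.exp (-v) • ε v) v := fun v =>
    (hcont.integral_hasStrictDerivAt (lam s) v).hasDerivAt
  have hxs : x s = xs := by
    rw [hx s]
    simp [hF, div_self (hαpos s hs).ne']
  have key : ∀ t ∈ Set.Ioo a b,
      HasDerivAt x ((α' t / α t) • x t +
        (σ' t - σ t * α' t / α t) • ε (lam t)) t := by
    intro t ht
    have hαt := hαpos t ht
    have hσt := hσpos t ht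
    have hlamd : HasDerivAt lam (α' t / α t - σ' t / σ t) t := by
      have h1 : HasDerivAt (fun u => Real.log (α u) - Real.log (σ u))
          (α' t / α t - σ' t / σ t) t :=
        ((hα t ht).log hαt.ne').sub ((hσ t ht).log hσt.ne')
      refine h1.congr_of_eventuallyEq ?_
      filter_upwards [Ioo_mem_nhds ht.1 ht.2] with u hu
      rw [hlam, Real.log_div (hαpos u hu).ne' (hσpos u hu).ne']
    have hexp : Real.exp (-lam t) = σ t / α t := by
      rw [hlam, ← Real.log_inv, Real.exp_log (by positivity), inv_div]
    have hprod : HasDerivAt (fun u => α u • F (lam u))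
        (α t • ((α' t / α t - σ' t / σ t) • (Real.exp (-(lam t)) • ε (lam t))) +
          α' t • F (lam t)) t :=
      (hα t ht).smul ((hFd (lam t)).scomp t hlamd)
    have hfirst : HasDerivAt (fun u => (α u / α s) • xs) ((α' t / α s) • xs) t :=
      ((hα t ht).div_const (α s)).smul_const xs
    have htot := hfirst.sub hprod
    have hxeq : x = fun u => (α u / α s) • xs - α u • F (lam u) := funext hx
    rw [hxeq]
    convert htot using 1
    · rfl
    · rfl
    · rfl
    · rfl
    simp only [hexp]
    match_scalars <;> field_simp <;> ring
  refine ⟨hxs, fun t ht => (key t ht).differentiableAt.differentiableWithinAt, key⟩
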